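/- For positive reals P, N₁, N₂, N₃ with N₁ ≤ N₂ ≤ N₃: (1/2)·log(1 + (P−N₂−N₃)/(N₁+N₂+2N₃)) + (1/2)·log(1 + N₃/(N₁+N₂)) + (1/2)·log(1 + N₂/N₁) ≥ (1/2)·log(2 + P/N₁) − 1/2, provided P ≥ N₂ + N₃. -/
import Mathlib


theorem type5_user1_layers (P N₁ N₂ N₃ : ℝ)
    (hN₁ : 0 < N₁) (h12 : N₁ ≤ N₂) (h23 : N₂ ≤ N₃) (hP : 0 < P)
    (hP23 : P ≥ N₂ + N₃) :
    (1/2) * Real.logb 2 (1 + (P - N₂ - N₃) / (N₁ + N₂ + 2*N₃))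
      + (1/2) * Real.logb 2 (1 + N₃ / (N₁ + N₂))
      + (1/2) * Real.logb 2 (1 + N₂ / N₁)
      ≥ (1/2) * Real.logb 2 (2 + P / N₁) - 1/2 := by
  have hN₂ : (0:ℝ) < N₂ := by linarith
  have hN₃ : (0:ℝ) < N₃ := by linarith
  have hd1 : (0:ℝ) < N₁ + N₂ + 2*N₃ := by linarith
  have hd2 : (0:ℝ) < N₁ + N₂ := by linarith
  have hA : 1 + (P - N₂ - N₃) / (N₁ + N₂ + 2*N₃) = (P + N₁ + N₃) / (N₁ + N₂ + 2*N₃) := by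
    field_simp; ring
  have hB : 1 + N₃ / (N₁ + N₂) = (N₁ + N₂ + N₃) / (N₁ + N₂) := by field_simp
  have hC : 1 + N₂ / N₁ = (N₁ + N₂) / N₁ := by field_simp
  have hApos : (0:ℝ) < (P + N₁ + N₃) / (N₁ + N₂ + 2*N₃) := by positivity
  have hBpos : (0:ℝ) < (N₁ + N₂ + N₃) / (N₁ + N₂) := by positivity
  have hCpos : (0:ℝ) < (N₁ + N₂) / N₁ := by positivity
  rw [hA, hB, hC]
  set a := (P + N₁ + N₃) / (N₁ + N₂ + 2*N₃)
  set b := (N₁ + N₂ + N₃) / (N₁ + N₂)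
  set c := (N₁ + N₂) / N₁
  have hsum : Real.logb 2 a + Real.logb 2 b + Real.logb 2 c = Real.logb 2 (a*b*c) := by
    rw [Real.logb_mul (ne_of_gt (mul_pos hApos hBpos)) (ne_of_gt hCpos),
        Real.logb_mul (ne_of_gt hApos) (ne_of_gt hBpos)]
  have hRpos : (0:ℝ) < (2 + P / N₁) / 2 := by positivity
  have key : (2 + P / N₁) / 2 ≤ a * b * c := by
    show (2 + P / N₁) / 2 ≤ _ / _ * (_ / _) * (_ / _)
    rw [div_mul_div_comm, div_mul_div_comm, div_le_div_iff₀ (by norm_num) (by positivity)]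
    have h1 : (2 + P / N₁ : ℝ) = (2*N₁ + P) / N₁ := by field_simp
    rw [h1, div_mul_eq_mul_div, div_le_iff₀ hN₁]
    nlinarith [mul_pos (mul_pos hd2 hN₁) (mul_pos hP hN₁),
      mul_pos (mul_pos hd2 hN₁) (mul_pos hP hN₂),
      mul_pos (mul_pos hd2 hN₁) (mul_pos hN₂ hN₃),
      mul_pos (mul_pos hd2 hN₁) (mul_pos hN₃ hN₃)]
  have hlog := Real.logb_le_logb_of_le (by norm_num : (1:ℝ) < 2) hRpos key
  have hdiv : Real.logb 2 ((2 + P / N₁) / 2) = Real.logb 2 (2 + P / N₁) - 1 := by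
    rw [Real.logb_div (ne_of_gt (by positivity)) (by norm_num),
        Real.logb_self_eq_one (by norm_num)]
  rw [hdiv] at hlog
  nlinarith [hsum, hlog]
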